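/- Suppose F₁ and F₂ are extensions of K entangleable by L/K (i.e., LF₁ = LF₂ ⊋ L), and L'/K satisfies LL' ∩ F₁ = L ∩ F₁. Then (LL')F₁ = (LL')F₂ and [(LL')F₁ : LL'] = [LF₁ : L]. -/

import Mathlib

open Module IntermediateField Polynomial

set_option synthInstance.maxHeartbeats 1000000
set_option maxHeartbeats 4000000

theorem galois_relfinrank_sup {K Ω : Type*} [Field K] [Field Ω] [Algebra K Ω]
    (M F : IntermediateField K Ω)
    [FiniteDimensional K ↥M] [FiniteDimensional K ↥F] [IsGalois K ↥F] :
    M.relfinrank (M ⊔ F) = M.relfinrank F := by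
  classical
  haveI : FiniteDimensional K ↥(M ⊔ F) := IntermediateField.finiteDimensional_sup M F
  obtain ⟨p, hps, hsp⟩ := IsGalois.is_separable_splitting_field K ↥F
  have hFsplit : (p.map (algebraMap K ↥F)).Splits := hsp.splits'
  have hFadj : F = adjoin K (p.rootSet Ω) := (isSplittingField_iff.mp hsp).2
  have hpE : (p.map (algebraMap K ↥(M ⊔ F))).Splits := by
    let ι : ↥F →ₐ[K] ↥(M ⊔ F) := inclusion (le_sup_right : F ≤ M ⊔ F)
    have := hFsplit.map ι.toRingHom; rw [Polynomial.map_map] at this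
    rwa [show ι.toRingHom.comp (algebraMap K ↥F)
      = algebraMap K ↥(M ⊔ F) from RingHom.ext fun x => ι.commutes x] at this
  set Fi : IntermediateField K ↥(M ⊔ F) := adjoin K (p.rootSet ↥(M ⊔ F)) with hFi
  set Mi : IntermediateField K ↥(M ⊔ F) := M.comap (M ⊔ F).val with hMi
  haveI : Normal K ↥Fi :=
    Normal.of_isSplittingField (hFEp := adjoin_rootSet_isSplittingField hpE)
  have hmapFi : Fi.map (M ⊔ F).val = F := by
    rw [hFi, adjoin_map, hpE.image_rootSet (M ⊔ F).val, ← hFadj]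
  have hmapMi : Mi.map (M ⊔ F).val = M :=
    map_comap_eq_self (by rw [fieldRange_val]; exact le_sup_left)
  have hsup : Mi ⊔ Fi = ⊤ := by
    apply map_injective (M ⊔ F).val
    rw [IntermediateField.map_sup, hmapMi, hmapFi, ← AlgHom.fieldRange_eq_map, fieldRange_val]
  -- E is Galois over Mi
  have hq : (p.map (algebraMap K ↥Mi)).Separable := hps.map
  have hroots : (p.map (algebraMap K ↥Mi)).rootSet ↥(M ⊔ F) = p.rootSet ↥(M ⊔ F) := by
    simp [Polynomial.rootSet, Polynomial.aroots, Polynomial.map_map,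
      ← IsScalarTower.algebraMap_eq]
  have hsfq : (p.map (algebraMap K ↥Mi)).IsSplittingField ↥Mi ↥(M ⊔ F) := by
    rw [isSplittingField_iff_intermediateField]
    refine ⟨?_, ?_⟩
    · rw [Polynomial.map_map, ← IsScalarTower.algebraMap_eq]; exact hpE
    · rw [hroots]
      apply restrictScalars_injective K
      rw [restrictScalars_adjoin_eq_sup, restrictScalars_top, ← hsup]
  haveI := hsfq
  haveI : IsGalois ↥Mi ↥(M ⊔ F) := IsGalois.of_separable_splitting_field hq
  haveI : FiniteDimensional ↥Mi ↥(M ⊔ F) := FiniteDimensional.right K ↥Mi ↥(M ⊔ F)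
  clear_value Fi Mi
  -- restriction homomorphism
  let r : (↥(M ⊔ F) ≃ₐ[↥Mi] ↥(M ⊔ F)) →* (↥(M ⊔ F) ≃ₐ[K] ↥(M ⊔ F)) :=
    MonoidHom.mk' (fun σ => σ.restrictScalars K) (fun _ _ => rfl)
  let ρ : (↥(M ⊔ F) ≃ₐ[↥Mi] ↥(M ⊔ F)) →* (↥Fi ≃ₐ[K] ↥Fi) :=
    (AlgEquiv.restrictNormalHom ↥Fi).comp r
  have hcomm : ∀ (σ : ↥(M ⊔ F) ≃ₐ[↥Mi] ↥(M ⊔ F)) (x : ↥Fi),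
      ((ρ σ x : ↥Fi) : ↥(M ⊔ F)) = σ (x : ↥(M ⊔ F)) := fun σ x =>
    AlgEquiv.restrictNormalHom_apply Fi (r σ) x
  have hinj : Function.Injective ρ := by
    rw [injective_iff_map_eq_one]
    intro σ hσ
    have hfix : (⊤ : IntermediateField K ↥(M ⊔ F)) ≤
        fixedField (Subgroup.zpowers (σ.restrictScalars K)) := by
      rw [← hsup]
      apply sup_le
      · rw [le_iff_le]
        rw [Subgroup.zpowers_le]
        rw [IntermediateField.mem_fixingSubgroup_iff]
        intro y hy
        exact σ.commutes ⟨y, hy⟩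
      · rw [le_iff_le, Subgroup.zpowers_le, IntermediateField.mem_fixingSubgroup_iff]
        intro y hy
        have := hcomm σ ⟨y, hy⟩
        rw [hσ] at this
        exact this.symm
    ext x
    have hx := hfix (mem_top (x := x))
    exact congrArg Subtype.val (hx ⟨σ.restrictScalars K, Subgroup.mem_zpowers _⟩)
  have hff : fixedField ρ.range = Mi.comap Fi.val := by
    apply le_antisymm
    · intro x hx
      have hbot : fixedField (⊤ : Subgroup (↥(M ⊔ F) ≃ₐ[↥Mi] ↥(M ⊔ F))) = ⊥ := by
        rw [← IntermediateField.fixingSubgroup_bot, IsGalois.fixedField_fixingSubgroup]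
      have hx' : (x : ↥(M ⊔ F)) ∈ (⊥ : IntermediateField ↥Mi ↥(M ⊔ F)) := by
        rw [← hbot]
        rintro ⟨σ, -⟩
        show σ • (x : ↥(M ⊔ F)) = x
        have h1 : ρ σ • x = x := hx ⟨ρ σ, ⟨σ, rfl⟩⟩
        have h2 := hcomm σ x
        rw [show ρ σ • x = ρ σ x from rfl] at h1
        rw [show σ • (x : ↥(M ⊔ F)) = σ (x : ↥(M ⊔ F)) from rfl, ← h2, h1]
      rw [IntermediateField.mem_bot] at hx'
      obtain ⟨c, hc⟩ := hx'
      show ((x : ↥Fi) : ↥(M ⊔ F)) ∈ Mi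
      rw [← hc]
      exact c.2
    · rintro x hx ⟨-, σ, rfl⟩
      show ρ σ x = x
      apply Subtype.ext
      rw [hcomm σ x]
      exact σ.commutes ⟨(x : ↥(M ⊔ F)), hx⟩
  have h1 : finrank ↥(fixedField ρ.range) ↥Fi = Nat.card ρ.range :=
    (finrank_fixedField_eq_card ρ.range).trans rfl
  have h2 : Nat.card ρ.range = Nat.card (↥(M ⊔ F) ≃ₐ[↥Mi] ↥(M ⊔ F)) :=
    Nat.card_congr ((Equiv.setCongr ρ.coe_range).trans (Equiv.ofInjective ρ hinj).symm)
  have h3 : Nat.card (↥(M ⊔ F) ≃ₐ[↥Mi] ↥(M ⊔ F)) = finrank ↥Mi ↥(M ⊔ F) :=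
    rfl.trans (IsGalois.card_aut_eq_finrank ↥Mi ↥(M ⊔ F))
  have h4 : finrank ↥(fixedField ρ.range) ↥Fi = finrank ↥(Mi.comap Fi.val) ↥Fi :=
by rw [hff]
  have hcard : finrank ↥Mi ↥(M ⊔ F) = finrank ↥(Mi.comap Fi.val) ↥Fi := by
    rw [← h3, ← h2, ← h1, h4]
  calc M.relfinrank (M ⊔ F)
      = finrank ↥Mi ↥(M ⊔ F) := by
        rw [hMi, finrank_comap, fieldRange_val]
    _ = finrank ↥(Mi.comap Fi.val) ↥Fi := hcard
    _ = Mi.relfinrank Fi.val.fieldRange := finrank_comap Mi Fi.val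
    _ = Mi.relfinrank Fi := by rw [fieldRange_val]
    _ = M.relfinrank (Fi.map (M ⊔ F).val) := by
        rw [hMi, relfinrank_comap]
    _ = M.relfinrank F := by rw [hmapFi]

/-- Proposition (compent): if `F₁, F₂` are entangleable by `L` (`LF₁ = LF₂ ⊋ L`),
`F₁/K` is finite Galois, and `L′` satisfies `LL′ ∩ F₁ = L ∩ F₁`, then `F₁, F₂`
are entangleable by `LL′` with `[(LL′)F₁ : LL′] = [LF₁ : L]`. -/
theorem stmt_12 {K : Type*} [Field K]
    (L L' F₁ F₂ : IntermediateField K (AlgebraicClosure K))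
    [FiniteDimensional K ↥L] [FiniteDimensional K ↥L']
    [FiniteDimensional K ↥F₁] [FiniteDimensional K ↥F₂]
    [IsGalois K ↥F₁]
    (hent : L ⊔ F₁ = L ⊔ F₂) (hproper : L < L ⊔ F₁)
    (hL' : (L ⊔ L') ⊓ F₁ = L ⊓ F₁) :
    (L ⊔ L') ⊔ F₁ = (L ⊔ L') ⊔ F₂ ∧
      Module.finrank ↥(L ⊔ L')
          ↥(IntermediateField.extendScalars (le_sup_left : L ⊔ L' ≤ (L ⊔ L') ⊔ F₁)) =
        Module.finrank ↥L
          ↥(IntermediateField.extendScalars (le_sup_left : L ≤ L ⊔ F₁)) := by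
  constructor
  · rw [sup_right_comm, hent, sup_right_comm]
  · haveI : FiniteDimensional K ↥(L ⊔ L') := IntermediateField.finiteDimensional_sup L L'
    calc finrank ↥(L ⊔ L') ↥(extendScalars (le_sup_left : L ⊔ L' ≤ (L ⊔ L') ⊔ F₁))
        = (L ⊔ L').relfinrank ((L ⊔ L') ⊔ F₁) := (relfinrank_eq_finrank_of_le _).symm
      _ = (L ⊔ L').relfinrank F₁ := galois_relfinrank_sup (L ⊔ L') F₁
      _ = L.relfinrank F₁ := relfinrank_eq_of_inf_eq hL'
      _ = L.relfinrank (L ⊔ F₁) := (galois_relfinrank_sup L F₁).symm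
      _ = finrank ↥L ↥(extendScalars (le_sup_left : L ≤ L ⊔ F₁)) :=
          relfinrank_eq_finrank_of_le _
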